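/- Let A ⊆ ℝ be both Fσ and Gδ, and suppose g : ℝ \ A → A is continuous. Then there exists a linear extension operator φ* from the space of Baire-one functions A → ℝ to the space of Baire-one functions ℝ → ℝ (i.e., φ*(f)|_A = f) that is positive, maps 1 to 1, and satisfies sup_{x∈ℝ} |φ*(f)(x)| = sup_{a∈A} |f(a)| for bounded f. -/

import Mathlib

open Set Filter Topology

def IsFSigma {X : Type*} [TopologicalSpace X] (s : Set X) : Prop :=
  ∃ F : ℕ → Set X, (∀ n, IsClosed (F n)) ∧ s = ⋃ n, F n

def FirstBorelClass {X Y : Type*} [TopologicalSpace X] [TopologicalSpace Y] (f : X → Y) : Prop :=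
  ∀ U : Set Y, IsOpen U → IsFSigma (f ⁻¹' U)


theorem extension_operator_baire_one (A : Set ℝ)
    (hFσ : IsFSigma A) (hGδ : IsGδ A)
    (g : ℝ → ℝ) (hg : ContinuousOn g Aᶜ) (hgA : MapsTo g Aᶜ A) :
    ∃ T : (A → ℝ) → (ℝ → ℝ),
      (∀ f₁ f₂ : A → ℝ, T (f₁ + f₂) = T f₁ + T f₂) ∧
      (∀ (c : ℝ) (f : A → ℝ), T (c • f) = c • T f) ∧
      (∀ f : A → ℝ,
        (∃ fₙ : ℕ → A → ℝ, (∀ n, Continuous (fₙ n)) ∧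
          ∀ a, Tendsto (fun n => fₙ n a) atTop (𝓝 (f a))) →
        ∃ Fₙ : ℕ → ℝ → ℝ, (∀ n, Continuous (Fₙ n)) ∧
          ∀ x, Tendsto (fun n => Fₙ n x) atTop (𝓝 (T f x))) ∧
      (∀ (f : A → ℝ) (x : ℝ) (hx : x ∈ A), T f x = f ⟨x, hx⟩) ∧
      (∀ f : A → ℝ, 0 ≤ f → 0 ≤ T f) ∧
      (T 1 = 1) ∧
      (∀ f : A → ℝ, Bornology.IsBounded (range f) →
        (⨆ x : ℝ, |T f x|) = ⨆ a : A, |f a|) := by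
  classical
  -- the retraction φ
  set φ : ℝ → ℝ := fun x => if h : x ∈ A then x else g x with hφdef
  have hφ : ∀ x, φ x ∈ A := by
    intro x
    by_cases h : x ∈ A
    · simp [φ, h]
    · simpa [φ, h] using hgA h
  have hφA : ∀ x (hx : x ∈ A), φ x = x := fun x hx => dif_pos hx
  have hφnA : ∀ x (hx : x ∉ A), φ x = g x := fun x hx => dif_neg hx
  set T : (A → ℝ) → (ℝ → ℝ) := fun f x => f ⟨φ x, hφ x⟩ with hTdef
  -- restriction property
  have hrestr : ∀ (f : A → ℝ) (x : ℝ) (hx : x ∈ A), T f x = f ⟨x, hx⟩ := by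
    intro f x hx
    simp only [hTdef]
    exact congrArg f (Subtype.ext (hφA x hx))
  -- continuity of T u on A and on Aᶜ for continuous u
  have hcontA : ∀ u : A → ℝ, Continuous u → ContinuousOn (T u) A := by
    intro u hu
    rw [continuousOn_iff_continuous_restrict]
    convert hu using 1
    funext a
    exact congrArg u (Subtype.ext (hφA a a.2))
  have hcontAc : ∀ u : A → ℝ, Continuous u → ContinuousOn (T u) Aᶜ := by
    intro u hu
    rw [continuousOn_iff_continuous_restrict]
    have : (Aᶜ).domRestrict (T u) = u ∘ (hgA.restrict g Aᶜ A) := by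
      funext x
      exact congrArg u (Subtype.ext (hφnA x.1 x.2))
    rw [this]
    exact hu.comp (hg.mapsToRestrict hgA)
  refine ⟨T, ?_, ?_, ?_, hrestr, ?_, ?_, ?_⟩
  · intro f₁ f₂; rfl
  · intro c f; rfl
  · -- Baire one preservation
    rintro f ⟨fₙ, hfc, hfl⟩
    obtain ⟨F, hFc, hFA⟩ := hFσ
    obtain ⟨U, hUo, hAU⟩ := hGδ.eq_iInter_nat
    set C : ℕ → Set ℝ := accumulate F with hC
    set K : ℕ → Set ℝ := accumulate (fun n => (U n)ᶜ) with hK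
    have hCc : ∀ n, IsClosed (C n) := fun n =>
      (Set.finite_Iic n).isClosed_biUnion fun i _ => hFc i
    have hKc : ∀ n, IsClosed (K n) := fun n =>
      (Set.finite_Iic n).isClosed_biUnion fun i _ => (hUo i).isClosed_compl
    have hCA : ∀ n, C n ⊆ A := fun n => by
      rw [hFA]; exact accumulate_subset_iUnion n
    have hKA : ∀ n, K n ⊆ Aᶜ := fun n => by
      intro x hx
      simp only [hK, accumulate, mem_iUnion] at hx
      obtain ⟨i, _, hi⟩ := hx
      intro hxA
      exact hi (by rw [hAU] at hxA; exact mem_iInter.1 hxA i)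
    set S : ℕ → Set ℝ := fun n => C n ∪ K n with hS
    have hSc : ∀ n, IsClosed (S n) := fun n => (hCc n).union (hKc n)
    have hSmono : Monotone S := fun m n h =>
      union_subset_union (monotone_accumulate h) (monotone_accumulate h)
    have hScover : ∀ x : ℝ, ∃ m, x ∈ S m := by
      intro x
      by_cases hx : x ∈ A
      · rw [hFA] at hx
        obtain ⟨m, hm⟩ := mem_iUnion.1 hx
        exact ⟨m, Or.inl (subset_accumulate hm)⟩
      · rw [hAU] at hx
        rw [mem_iInter] at hx
        push_neg at hx
        obtain ⟨m, hm⟩ := hx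
        exact ⟨m, Or.inr (subset_accumulate hm)⟩
    -- continuous extensions
    have key : ∀ n, ∃ Fn : ℝ → ℝ, Continuous Fn ∧ ∀ x ∈ S n, Fn x = T (fₙ n) x := by
      intro n
      have hco : ContinuousOn (T (fₙ n)) (S n) := by
        intro x hx
        have h1 : ContinuousWithinAt (T (fₙ n)) (C n) x := by
          rcases hx with hx | hx
          · exact ((hcontA _ (hfc n)).mono (hCA n)) x hx
          · refine continuousWithinAt_of_notMem_closure ?_
            rw [(hCc n).closure_eq]
            exact fun hxC => (hKA n hx) (hCA n hxC)
        have h2 : ContinuousWithinAt (T (fₙ n)) (K n) x := by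
          rcases hx with hx | hx
          · refine continuousWithinAt_of_notMem_closure ?_
            rw [(hKc n).closure_eq]
            exact fun hxK => (hKA n hxK) (hCA n hx)
          · exact ((hcontAc _ (hfc n)).mono (hKA n)) x hx
        exact h1.union h2
      obtain ⟨Fn, hFn⟩ :=
        (⟨(S n).domRestrict (T (fₙ n)), continuousOn_iff_continuous_restrict.1 hco⟩ :
          C(S n, ℝ)).exists_restrict_eq (hSc n)
      refine ⟨Fn, Fn.continuous, fun x hx => ?_⟩
      have := congrFun (congrArg ContinuousMap.toFun hFn) ⟨x, hx⟩
      simpa using this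
    choose Fn hFnc hFneq using key
    refine ⟨Fn, hFnc, fun x => ?_⟩
    obtain ⟨m, hm⟩ := hScover x
    have hev : (fun n => Fn n x) =ᶠ[atTop] fun n => fₙ n ⟨φ x, hφ x⟩ := by
      filter_upwards [eventually_ge_atTop m] with n hn
      exact hFneq n x (hSmono hn hm)
    exact (Tendsto.congr' hev.symm (hfl ⟨φ x, hφ x⟩))
  · intro f hf x
    exact hf ⟨φ x, hφ x⟩
  · rfl
  · intro f hb
    obtain ⟨M, hM⟩ := hb.exists_norm_le
    have hM' : ∀ a : A, |f a| ≤ M := fun a => by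
      simpa [Real.norm_eq_abs] using hM (f a) (mem_range_self a)
    haveI : Nonempty A := ⟨⟨φ 0, hφ 0⟩⟩
    have bdd1 : BddAbove (range fun a : A => |f a|) :=
      ⟨M, by rintro _ ⟨a, rfl⟩; exact hM' a⟩
    have bdd2 : BddAbove (range fun x : ℝ => |T f x|) :=
      ⟨M, by rintro _ ⟨x, rfl⟩; exact hM' ⟨φ x, hφ x⟩⟩
    apply le_antisymm
    · exact ciSup_le fun x => le_ciSup bdd1 (⟨φ x, hφ x⟩ : A)
    · refine ciSup_le fun a => ?_
      have : |f a| = |T f a.1| := by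
        rw [hrestr f a.1 a.2]
      rw [this]
      exact le_ciSup bdd2 (a : ℝ)
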